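/- Let S_λ be a bounded weighted shift on a directed tree with weights λ. Then f ∈ N(S_λ*) if and only if for every vertex u ∈ V, ∑_{v ∈ Chi(u)} conj(λ_v) f(v) = 0. In particular, if 𝒯 has a root then e_root ∈ N(S_λ*), and for each branching vertex u the space ℓ²(Chi(u)) ⊖ ⟨λ^u⟩ is contained in N(S_λ*), where λ^u ∈ ℓ²(Chi(u)) is the vector (λ_v)_{v∈Chi(u)}. -/

import Mathlib

open ContinuousLinearMap

/-- Standard basis vector of ℓ²(V). -/
noncomputable def e {V : Type*} [DecidableEq V] (v : V) : lp (fun _ : V => ℂ) 2 :=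
  lp.single 2 v 1

lemma adjoint_apply_eq {V : Type*} [DecidableEq V]
    (isRoot : V → Prop) [DecidablePred isRoot] (par : V → V) (lam : V → ℂ)
    (S : lp (fun _ : V => ℂ) 2 →L[ℂ] lp (fun _ : V => ℂ) 2)
    (hS : ∀ f : lp (fun _ : V => ℂ) 2, ∀ v : V,
      (S f : ∀ _ : V, ℂ) v = if isRoot v then 0 else lam v * (f : ∀ _ : V, ℂ) (par v))
    (f : lp (fun _ : V => ℂ) 2) (u : V) :
    ((ContinuousLinearMap.adjoint S) f : ∀ _ : V, ℂ) u =
      ∑' v : {v : V // ¬ isRoot v ∧ par v = u},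
        (starRingEnd ℂ) (lam v.1) * (f : ∀ _ : V, ℂ) v.1 := by
  have h1 : (inner ℂ (e u) ((ContinuousLinearMap.adjoint S) f) : ℂ)
      = ((ContinuousLinearMap.adjoint S) f : ∀ _ : V, ℂ) u := by
    rw [e, lp.inner_single_left]
    simp [RCLike.inner_apply]
  have h2 : (inner ℂ (e u) ((ContinuousLinearMap.adjoint S) f) : ℂ)
      = inner ℂ (S (e u)) f := by
    rw [ContinuousLinearMap.adjoint_inner_right]
  rw [← h1, h2, lp.inner_eq_tsum]
  have heq : (fun v : V => (inner ℂ ((S (e u) : ∀ _ : V, ℂ) v) ((f : ∀ _ : V, ℂ) v) : ℂ))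
      = fun v : V => Set.indicator {v : V | ¬ isRoot v ∧ par v = u}
          (fun v => (starRingEnd ℂ) (lam v) * (f : ∀ _ : V, ℂ) v) v := by
    funext v
    rw [Set.indicator_apply]
    have hSe : (S (e u) : ∀ _ : V, ℂ) v
        = if isRoot v then 0 else lam v * (e u : ∀ _ : V, ℂ) (par v) := hS (e u) v
    by_cases hv : ¬ isRoot v ∧ par v = u
    · simp only [Set.mem_setOf_eq, hv, if_true]
      rw [RCLike.inner_apply, hSe, if_neg hv.1, hv.2]
      simp [e, lp.single_apply_self, mul_comm]
    · simp only [Set.mem_setOf_eq, hv, if_false]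
      rw [RCLike.inner_apply, hSe]
      push_neg at hv
      by_cases hr : isRoot v
      · simp [hr]
      · rw [if_neg hr]
        have : (e u : ∀ _ : V, ℂ) (par v) = 0 :=
          lp.single_apply_ne 2 u 1 (hv hr)
        simp [this]
  rw [show (∑' v : V, (inner ℂ ((S (e u) : ∀ _ : V, ℂ) v) ((f : ∀ _ : V, ℂ) v) : ℂ)) = _ from
    congrArg tsum heq]
  exact (tsum_subtype {v : V | ¬ isRoot v ∧ par v = u}
    (fun v => (starRingEnd ℂ) (lam v) * (f : ∀ _ : V, ℂ) v)).symm

/-- For a bounded weighted shift `S_λ` on a directed tree (encoded via `isRoot` and the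
parent map `par`, with `Chi(u) = {v : ¬isRoot v ∧ par v = u}`):
`f ∈ N(S_λ*)` iff `∑_{v ∈ Chi(u)} conj(λ_v) f(v) = 0` for every `u`. In particular
`e_root ∈ N(S_λ*)`, and every `f` supported in `Chi(u)` orthogonal to the weight vector
`λ^u` belongs to `N(S_λ*)`. -/
theorem stmt_14 {V : Type*} [Countable V] [DecidableEq V]
    (isRoot : V → Prop) [DecidablePred isRoot] (par : V → V) (lam : V → ℂ)
    (S : lp (fun _ : V => ℂ) 2 →L[ℂ] lp (fun _ : V => ℂ) 2)
    (hS : ∀ f : lp (fun _ : V => ℂ) 2, ∀ v : V,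
      (S f : ∀ _ : V, ℂ) v = if isRoot v then 0 else lam v * (f : ∀ _ : V, ℂ) (par v)) :
    (∀ f : lp (fun _ : V => ℂ) 2,
      f ∈ LinearMap.ker (ContinuousLinearMap.adjoint S : lp (fun _ : V => ℂ) 2 →ₗ[ℂ] lp (fun _ : V => ℂ) 2) ↔
        ∀ u : V, (∑' v : {v : V // ¬ isRoot v ∧ par v = u},
          (starRingEnd ℂ) (lam v.1) * (f : ∀ _ : V, ℂ) v.1) = 0) ∧
    (∀ r : V, isRoot r → e r ∈ LinearMap.ker (ContinuousLinearMap.adjoint S : lp (fun _ : V => ℂ) 2 →ₗ[ℂ] lp (fun _ : V => ℂ) 2)) ∧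
    (∀ u : V, ∀ f : lp (fun _ : V => ℂ) 2,
      (∀ v : V, (f : ∀ _ : V, ℂ) v ≠ 0 → ¬ isRoot v ∧ par v = u) →
      (∑' v : {v : V // ¬ isRoot v ∧ par v = u},
          (starRingEnd ℂ) (lam v.1) * (f : ∀ _ : V, ℂ) v.1) = 0 →
      f ∈ LinearMap.ker (ContinuousLinearMap.adjoint S : lp (fun _ : V => ℂ) 2 →ₗ[ℂ] lp (fun _ : V => ℂ) 2)) := by
  have key : ∀ f : lp (fun _ : V => ℂ) 2,
      f ∈ LinearMap.ker (ContinuousLinearMap.adjoint S : lp (fun _ : V => ℂ) 2 →ₗ[ℂ] lp (fun _ : V => ℂ) 2) ↔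
        ∀ u : V, (∑' v : {v : V // ¬ isRoot v ∧ par v = u},
          (starRingEnd ℂ) (lam v.1) * (f : ∀ _ : V, ℂ) v.1) = 0 := by
    intro f
    rw [LinearMap.mem_ker, ContinuousLinearMap.coe_coe]
    constructor
    · intro h u
      rw [← adjoint_apply_eq isRoot par lam S hS f u, h]
      rfl
    · intro h
      apply lp.ext
      funext u
      rw [adjoint_apply_eq isRoot par lam S hS f u, h u]
      rfl
  refine ⟨key, ?_, ?_⟩
  · intro r hr
    rw [key]
    intro u
    have : ∀ v : {v : V // ¬ isRoot v ∧ par v = u},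
        (starRingEnd ℂ) (lam v.1) * (e r : ∀ _ : V, ℂ) v.1 = 0 := by
      rintro ⟨v, hv1, hv2⟩
      have : (e r : ∀ _ : V, ℂ) v = 0 := by
        apply lp.single_apply_ne
        rintro rfl
        exact hv1 hr
      simp [this]
    rw [tsum_congr this, tsum_zero]
  · intro u f hsupp hsum
    rw [key]
    intro w
    by_cases hw : w = u
    · subst hw; exact hsum
    · have : ∀ v : {v : V // ¬ isRoot v ∧ par v = w},
          (starRingEnd ℂ) (lam v.1) * (f : ∀ _ : V, ℂ) v.1 = 0 := by
        rintro ⟨v, hv1, hv2⟩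
        by_cases hfv : (f : ∀ _ : V, ℂ) v = 0
        · simp [hfv]
        · exact absurd (hv2.symm.trans (hsupp v hfv).2) hw
      rw [tsum_congr this, tsum_zero]
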